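/- Define Λ : [−1,1] → X by Λ(t) = L(2t+1) for t ∈ [−1,0] and Λ(t) = swap(L(2t−1)) for t ∈ [0,1], where swap interchanges the rectangles C₁ and C₂. Then Λ is well defined and continuous (the two formulas agree at t = 0, since L(1) = swap(L(−1))), Λ(−1) = Λ(1), and the loop Λ is not null-homotopic in X. (This witnesses that the homology class of α₁(ℓ₁,μ₁) in the arity (2,2) component of the Swiss-Cheese operad is nonzero, which is needed in the non-formality argument.) -/

import Mathlib

/-- A 4-tuple of rectangles `(C₁, C₂, O₋, O₊)` in `ℝ²`, each recorded by the endpoints of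
its two defining intervals: index `0` is `C₁`, `1` is `C₂`, `2` is `O₋`, `3` is `O₊`; the
entry at each index is `((a₀, b₀), (a₁, b₁))`, standing for `[a₀,b₀] × [a₁,b₁]`. -/
abbrev Cfg : Type := Fin 4 → (ℝ × ℝ) × (ℝ × ℝ)

/-- The rectangle `[a₀,b₀] × [a₁,b₁]` determined by the endpoint data `r = ((a₀,b₀),(a₁,b₁))`. -/
def rect (r : (ℝ × ℝ) × (ℝ × ℝ)) : Set (ℝ × ℝ) :=
  Set.Icc r.1.1 r.1.2 ×ˢ Set.Icc r.2.1 r.2.2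

/-- The space `X` of 4-tuples `(C₁, C₂, O₋, O₊)` of rectangles (products of two nondegenerate
closed intervals) contained in `[-1,1]²`, with pairwise disjoint interiors, such that the
first intervals of `C₁` and `C₂` are contained in `[0,1]` and the first intervals of `O₋`
and `O₊` have left endpoint `0`.  It is topologized as a subspace of `ℝ^16` via the interval
endpoints. -/
def Xcfg : Set Cfg :=
  {x | (∀ k, (x k).1.1 < (x k).1.2 ∧ (x k).2.1 < (x k).2.2) ∧
       (∀ k, -1 ≤ (x k).1.1 ∧ (x k).1.2 ≤ 1 ∧ -1 ≤ (x k).2.1 ∧ (x k).2.2 ≤ 1) ∧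
       (∀ k l, k ≠ l → Disjoint (interior (rect (x k))) (interior (rect (x l)))) ∧
       (0 ≤ (x 0).1.1 ∧ (x 0).1.2 ≤ 1) ∧ (0 ≤ (x 1).1.1 ∧ (x 1).1.2 ≤ 1) ∧
       (x 2).1.1 = 0 ∧ (x 3).1.1 = 0}

/-- Interchanging the two closed rectangles `C₁` and `C₂` of a configuration. -/
def swapC (x : Cfg) : Cfg := fun k => x (Equiv.swap (0 : Fin 4) 1 k)

/-- `J(+) = [0,1]` and `J(-) = [-1,0]` (`true` is `+`, `false` is `-`). -/
def Jb (b : Bool) : ℝ × ℝ := if b then (0, 1) else (-1, 0)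

/-- `T(u) = max(1/2, (1+u)/2)`. -/
noncomputable def Tf (u : ℝ) : ℝ := max (1/2) ((1 + u) / 2)

/-- `I₊(u) = [min(0,u), 1]` and `I₋(u) = [-1, -min(0,u)]`. -/
noncomputable def Ib (b : Bool) (u : ℝ) : ℝ × ℝ :=
  if b then (min 0 u, 1) else (-1, -min 0 u)

/-- The regime `|t| ≤ 1/3` of `η⁺₁`, with sign `b` and parameter `u = 6|t| - 1`:
`C₁ = [1/2,1] × [-1,1]`, `C₂ = [1/4,1/2] × I_b(u)`, `O_b = [0,1/4] × J(b)`,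
`O_{-b} = [0, T(u)/2] × J(-b)`. -/
noncomputable def etaIn (b : Bool) (u : ℝ) : Cfg := fun k =>
  if k = 0 then ((1/2, 1), (-1, 1))
  else if k = 1 then ((1/4, 1/2), Ib b u)
  else if k = 2 then ((0, if b then Tf u / 2 else 1/4), Jb false)
  else ((0, if b then 1/4 else Tf u / 2), Jb true)

/-- The regime `1/3 ≤ |t| ≤ 2/3` of `η⁺₁`, with sign `b` and parameter `u = 6|t| - 3`:
`C₁ = [1/2,1] × I_{-b}(u)`, `C₂ = [T(u)/2, T(u)] × J(b)`, `O_b = [0, T(u)/2] × J(b)`,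
`O_{-b} = [0,1/2] × J(-b)`. -/
noncomputable def etaMid (b : Bool) (u : ℝ) : Cfg := fun k =>
  if k = 0 then ((1/2, 1), Ib (!b) u)
  else if k = 1 then ((Tf u / 2, Tf u), Jb b)
  else if k = 2 then ((0, if b then 1/2 else Tf u / 2), Jb false)
  else ((0, if b then Tf u / 2 else 1/2), Jb true)

/-- The regime `|t| ≥ 2/3` of `η⁺₁`, with sign `b`:
`C₁ = [1/2,1] × J(-b)`, `C₂ = [1/2,1] × J(b)`, `O₋ = [0,1/2] × J(-)`,
`O₊ = [0,1/2] × J(+)`. -/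
noncomputable def etaOut (b : Bool) : Cfg := fun k =>
  if k = 0 then ((1/2, 1), Jb (!b))
  else if k = 1 then ((1/2, 1), Jb b)
  else if k = 2 then ((0, 1/2), Jb false)
  else ((0, 1/2), Jb true)

/-- The path `η⁺₁ : [-1,1] → X`, assembled from the three regimes, with sign
`b = (0 ≤ t)`. -/
noncomputable def etaP (t : ℝ) : Cfg :=
  if |t| ≤ 1/3 then etaIn (decide (0 ≤ t)) (6 * |t| - 1)
  else if |t| ≤ 2/3 then etaMid (decide (0 ≤ t)) (6 * |t| - 3)
  else etaOut (decide (0 ≤ t))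

/-- The path `L(t) = α₁(ℓ⁺₁(t), μ₁)`, with `M = |2t|`:
`C₁ = [(13-M)/16, (15-M)/16] × [(-1-2t)/4, (1-2t)/4]`,
`C₂ = [(9+M)/16, (11+M)/16] × [(-1+2t)/4, (1+2t)/4]`,
`O₋ = [0,1/2] × [-1,0]`, `O₊ = [0,1/2] × [0,1]`. -/
noncomputable def Lmap (t : ℝ) : Cfg := fun k =>
  if k = 0 then (((13 - |2*t|)/16, (15 - |2*t|)/16), ((-1 - 2*t)/4, (1 - 2*t)/4))
  else if k = 1 then (((9 + |2*t|)/16, (11 + |2*t|)/16), ((-1 + 2*t)/4, (1 + 2*t)/4))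
  else if k = 2 then ((0, 1/2), (-1, 0))
  else ((0, 1/2), (0, 1))

/-- The loop `Λ`, obtained by concatenating `L` with its closed-label swap:
`Λ(t) = L(2t+1)` for `t ∈ [-1,0]` and `Λ(t) = swap(L(2t-1))` for `t ∈ [0,1]`. -/
noncomputable def Lam (t : ℝ) : Cfg :=
  if t ≤ 0 then Lmap (2*t + 1) else swapC (Lmap (2*t - 1))

open Complex Real Set

/-! ### Basic evaluation lemmas -/

lemma part1 : Lmap 1 = swapC (Lmap (-1)) := by
  funext k
  fin_cases k <;>
    simp [Lmap, swapC, Equiv.swap_apply_def, Prod.ext_iff] <;> norm_num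

lemma contLmap : Continuous Lmap := by
  apply continuous_pi
  intro k
  unfold Lmap
  split_ifs <;> fun_prop

lemma part2 : Continuous Lam := by
  have h1 : Continuous fun t : ℝ => Lmap (2*t + 1) := contLmap.comp (by fun_prop)
  have h2 : Continuous fun t : ℝ => swapC (Lmap (2*t - 1)) := by
    have h3 : Continuous fun t : ℝ => Lmap (2*t - 1) := contLmap.comp (by fun_prop)
    exact continuous_pi fun k => (continuous_apply (Equiv.swap (0 : Fin 4) 1 k)).comp h3
  unfold Lam
  refine Continuous.if_le h1 h2 continuous_id continuous_const ?_
  intro a ha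
  change a = 0 at ha
  subst ha
  rw [show (2*(0:ℝ)+1) = 1 by norm_num, show (2*(0:ℝ)-1) = -1 by norm_num]
  exact part1

lemma part4 : Lam (-1) = Lam 1 := by
  have h1 : Lam (-1) = Lmap (-1) := by
    rw [Lam, if_pos (by norm_num : (-1:ℝ) ≤ 0)]
    norm_num
  have h2 : Lam 1 = swapC (Lmap 1) := by
    rw [Lam, if_neg (by norm_num : ¬ (1:ℝ) ≤ 0)]
    norm_num
  rw [h1, h2, part1]
  funext k
  simp [swapC, Equiv.swap_apply_self]

/-! ### Membership in `Xcfg` -/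

lemma disjX {r r' : (ℝ×ℝ)×(ℝ×ℝ)} (h : r.1.2 ≤ r'.1.1) :
    Disjoint (interior (rect r)) (interior (rect r')) := by
  simp only [rect, interior_prod_eq, interior_Icc]
  refine Set.disjoint_left.mpr ?_
  rintro ⟨a, b⟩ ⟨h1, _⟩ ⟨h2, _⟩
  simp only [Set.mem_Ioo] at h1 h2
  linarith [h1.2, h2.1]

lemma disjY {r r' : (ℝ×ℝ)×(ℝ×ℝ)} (h : r.2.2 ≤ r'.2.1) :
    Disjoint (interior (rect r)) (interior (rect r')) := by
  simp only [rect, interior_prod_eq, interior_Icc]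
  refine Set.disjoint_left.mpr ?_
  rintro ⟨a, b⟩ ⟨_, h1⟩ ⟨_, h2⟩
  simp only [Set.mem_Ioo] at h1 h2
  linarith [h1.2, h2.1]

lemma Lmap_mem {u : ℝ} (hu : |u| ≤ 1) : Lmap u ∈ Xcfg := by
  obtain ⟨hu1, hu2⟩ := abs_le.mp hu
  have hM : |2*u| = 2*|u| := by rw [abs_mul]; norm_num
  have hM0 : 0 ≤ |2*u| := abs_nonneg _
  have hM2 : |2*u| ≤ 2 := by rw [hM]; linarith
  have habs := abs_nonneg u
  refine ⟨?_, ?_, ?_, ?_, ?_, ?_, ?_⟩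
  · intro k; fin_cases k <;> simp [Lmap] <;> (repeat' apply And.intro) <;> linarith
  · intro k; fin_cases k <;> simp [Lmap] <;> norm_num <;> (repeat' apply And.intro) <;> linarith
  · have D01 : Disjoint (interior (rect (Lmap u 0))) (interior (rect (Lmap u 1))) := by
      rcases le_or_gt (|u|) (1/2) with h | h
      · refine (disjX ?_).symm
        simp [Lmap]
        linarith
      · rcases le_or_gt u 0 with h' | h'
        · refine (disjY ?_).symm
          simp [Lmap]
          rw [abs_of_nonpos h'] at h
          linarith
        · refine disjY ?_
          simp [Lmap]
          rw [abs_of_pos h'] at h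
          linarith
    have D02 : Disjoint (interior (rect (Lmap u 0))) (interior (rect (Lmap u 2))) := by
      refine (disjX ?_).symm; simp [Lmap]; linarith
    have D03 : Disjoint (interior (rect (Lmap u 0))) (interior (rect (Lmap u 3))) := by
      refine (disjX ?_).symm; simp [Lmap]; linarith
    have D12 : Disjoint (interior (rect (Lmap u 1))) (interior (rect (Lmap u 2))) := by
      refine (disjX ?_).symm; simp [Lmap]; linarith
    have D13 : Disjoint (interior (rect (Lmap u 1))) (interior (rect (Lmap u 3))) := by
      refine (disjX ?_).symm; simp [Lmap]; linarith
    have D23 : Disjoint (interior (rect (Lmap u 2))) (interior (rect (Lmap u 3))) := by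
      refine disjY ?_; simp [Lmap]
    intro k l hkl
    fin_cases k <;> fin_cases l <;>
      first
        | exact absurd rfl hkl
        | exact D01 | exact D02 | exact D03 | exact D12 | exact D13 | exact D23
        | exact D01.symm | exact D02.symm | exact D03.symm | exact D12.symm
        | exact D13.symm | exact D23.symm
  · simp [Lmap] <;> (repeat' apply And.intro) <;> linarith
  · simp [Lmap] <;> (repeat' apply And.intro) <;> linarith
  · simp [Lmap]
  · simp [Lmap]

lemma swap_mem {x : Cfg} (hx : x ∈ Xcfg) : swapC x ∈ Xcfg := by
  obtain ⟨h1, h2, h3, h4, h5, h6, h7⟩ := hx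
  refine ⟨fun k => h1 _, fun k => h2 _,
    fun k l hkl => h3 _ _ (fun hh => hkl ((Equiv.swap (0:Fin 4) 1).injective hh)), ?_, ?_, ?_, ?_⟩
  · simpa [swapC, Equiv.swap_apply_left] using h5
  · simpa [swapC, Equiv.swap_apply_right] using h4
  · simpa [swapC, Equiv.swap_apply_of_ne_of_ne (by decide : (2:Fin 4) ≠ 0) (by decide : (2:Fin 4) ≠ 1)] using h6
  · simpa [swapC, Equiv.swap_apply_of_ne_of_ne (by decide : (3:Fin 4) ≠ 0) (by decide : (3:Fin 4) ≠ 1)] using h7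

lemma part3 : ∀ t ∈ Set.Icc (-1 : ℝ) 1, Lam t ∈ Xcfg := by
  intro t ht
  rw [Lam]
  split_ifs with h
  · exact Lmap_mem (abs_le.mpr ⟨by linarith [ht.1], by linarith⟩)
  · exact swap_mem (Lmap_mem (abs_le.mpr ⟨by linarith, by linarith [ht.2]⟩))

/-! ### The center-difference invariant -/

noncomputable def vC (x : Cfg) : ℂ :=
  ((((x 1).1.1 + (x 1).1.2) - ((x 0).1.1 + (x 0).1.2) : ℝ) : ℂ) +
  ((((x 1).2.1 + (x 1).2.2) - ((x 0).2.1 + (x 0).2.2) : ℝ) : ℂ) * Complex.I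

lemma vC_cont : Continuous vC := by
  unfold vC
  fun_prop

lemma vC_ne {x : Cfg} (hx : x ∈ Xcfg) : vC x ≠ 0 := by
  obtain ⟨h1, -, h3, -⟩ := hx
  intro h
  have hre := congrArg Complex.re h
  have him := congrArg Complex.im h
  simp [vC] at hre him
  have m0 : ((((x 0).1.1 + (x 0).1.2)/2, ((x 0).2.1 + (x 0).2.2)/2) : ℝ × ℝ)
      ∈ interior (rect (x 0)) := by
    simp only [rect, interior_prod_eq, interior_Icc]
    exact ⟨⟨by linarith [(h1 0).1], by linarith [(h1 0).1]⟩,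
           ⟨by linarith [(h1 0).2], by linarith [(h1 0).2]⟩⟩
  have m1 : ((((x 0).1.1 + (x 0).1.2)/2, ((x 0).2.1 + (x 0).2.2)/2) : ℝ × ℝ)
      ∈ interior (rect (x 1)) := by
    simp only [rect, interior_prod_eq, interior_Icc]
    exact ⟨⟨by linarith [(h1 1).1], by linarith [(h1 1).1]⟩,
           ⟨by linarith [(h1 1).2], by linarith [(h1 1).2]⟩⟩
  exact Set.disjoint_left.mp (h3 0 1 (by decide)) m0 m1

lemma vLmap (u : ℝ) : vC (Lmap u) =
    (((|2*u| - 2)/4 : ℝ) : ℂ) + ((2*u : ℝ) : ℂ) * Complex.I := by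
  simp [vC, Lmap, Complex.ext_iff]
  constructor <;> ring

lemma vC_swap (x : Cfg) : vC (swapC x) = -vC x := by
  simp [vC, swapC, Equiv.swap_apply_left, Equiv.swap_apply_right, Equiv.swap_apply_of_ne_of_ne]
  ring

/-! ### The comparison circle loop -/

noncomputable def cfun (s : ℝ) : ℂ :=
  Complex.exp (((-(π/2) - 2*π*s : ℝ) : ℂ) * Complex.I)

lemma cfun_re (s : ℝ) : (cfun s).re = -Real.sin (2*π*s) := by
  rw [cfun, Complex.exp_ofReal_mul_I_re,
    show -(π/2) - 2*π*s = -(2*π*s + π/2) by ring, Real.cos_neg, Real.cos_add_pi_div_two]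

lemma cfun_im (s : ℝ) : (cfun s).im = -Real.cos (2*π*s) := by
  rw [cfun, Complex.exp_ofReal_mul_I_im,
    show -(π/2) - 2*π*s = -(2*π*s + π/2) by ring, Real.sin_neg, Real.sin_add_pi_div_two]

lemma cfun_ne (s : ℝ) : cfun s ≠ 0 := Complex.exp_ne_zero _

lemma mkC_re (x y : ℝ) : ((x : ℂ) + (y : ℂ) * Complex.I).re = x := by simp

lemma mkC_im (x y : ℝ) : ((x : ℂ) + (y : ℂ) * Complex.I).im = y := by simp

lemma seg_ne {a b : ℂ} {l σ τ : ℝ} (hl0 : 0 ≤ l) (hl1 : l ≤ 1)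
    (ha : a ≠ 0) (hb : b ≠ 0) (hσ : σ ≠ 0) (hτ : τ ≠ 0)
    (h1 : 0 ≤ σ * a.re) (h2 : 0 ≤ σ * b.re) (h3 : 0 ≤ τ * a.im) (h4 : 0 ≤ τ * b.im) :
    (1 - (l : ℂ)) * a + (l : ℂ) * b ≠ 0 := by
  intro h
  have hre : (1 - l) * a.re + l * b.re = 0 := by
    have := congrArg Complex.re h
    simpa using this
  have him : (1 - l) * a.im + l * b.im = 0 := by
    have := congrArg Complex.im h
    simpa using this
  have k1 : 0 ≤ (1 - l) * (σ * a.re) := mul_nonneg (by linarith) h1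
  have k2 : 0 ≤ l * (σ * b.re) := mul_nonneg hl0 h2
  have k3 : 0 ≤ (1 - l) * (τ * a.im) := mul_nonneg (by linarith) h3
  have k4 : 0 ≤ l * (τ * b.im) := mul_nonneg hl0 h4
  have s1 : (1 - l) * (σ * a.re) + l * (σ * b.re) = 0 := by linear_combination σ * hre
  have s2 : (1 - l) * (τ * a.im) + l * (τ * b.im) = 0 := by linear_combination τ * him
  rcases eq_or_lt_of_le hl0 with h0 | h0
  · have hl' : l = 0 := h0.symm
    subst hl'
    have e1 : a.re = 0 := by linarith
    have e2 : a.im = 0 := by linarith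
    exact ha (Complex.ext (by simp [e1]) (by simp [e2]))
  · have e2 : b.re = 0 := by
      have hz : l * (σ * b.re) = 0 := by linarith
      rcases mul_eq_zero.mp hz with h' | h'
      · exact absurd h' (ne_of_gt h0)
      · exact (mul_eq_zero.mp h').resolve_left hσ
    have e4 : b.im = 0 := by
      have hz : l * (τ * b.im) = 0 := by linarith
      rcases mul_eq_zero.mp hz with h' | h'
      · exact absurd h' (ne_of_gt h0)
      · exact (mul_eq_zero.mp h').resolve_left hτ
    exact hb (Complex.ext e2 e4)

lemma segOK {s l : ℝ} (hs0 : 0 ≤ s) (hs1 : s ≤ 1) (hl0 : 0 ≤ l) (hl1 : l ≤ 1) :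
    (1 - (l : ℂ)) * cfun s + (l : ℂ) * vC (Lam (2*s - 1)) ≠ 0 := by
  have hπ := Real.pi_pos
  by_cases hs : s ≤ 1/2
  · have hL : Lam (2*s - 1) = Lmap (4*s - 1) := by
      rw [Lam, if_pos (by linarith : 2*s - 1 ≤ 0), show 2*(2*s-1) + 1 = 4*s - 1 by ring]
    rw [hL, vLmap]
    by_cases hq : s ≤ 1/4
    · have habs : |2*(4*s - 1)| = 2 - 8*s := by
        rw [abs_of_nonpos (by linarith)]; ring
      rw [habs]
      refine seg_ne (σ := -1) (τ := -1) hl0 hl1 (cfun_ne s) ?_ (by norm_num) (by norm_num)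
        ?_ ?_ ?_ ?_
      · intro hz
        have h1 := congrArg Complex.re hz
        have h2 := congrArg Complex.im hz
        rw [mkC_re] at h1
        rw [mkC_im] at h2
        simp at h1 h2
        linarith
      · rw [cfun_re]
        have : 0 ≤ Real.sin (2*π*s) :=
          Real.sin_nonneg_of_nonneg_of_le_pi (by positivity) (by nlinarith)
        linarith
      · rw [mkC_re]; nlinarith
      · rw [cfun_im]
        have : 0 ≤ Real.cos (2*π*s) :=
          Real.cos_nonneg_of_mem_Icc ⟨by nlinarith, by nlinarith⟩
        linarith
      · rw [mkC_im]; nlinarith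
    · have habs : |2*(4*s - 1)| = 8*s - 2 := by
        rw [_root_.abs_of_nonneg (by linarith)]; ring
      rw [habs]
      refine seg_ne (σ := -1) (τ := 1) hl0 hl1 (cfun_ne s) ?_ (by norm_num) (by norm_num)
        ?_ ?_ ?_ ?_
      · intro hz
        have h1 := congrArg Complex.re hz
        have h2 := congrArg Complex.im hz
        rw [mkC_re] at h1
        rw [mkC_im] at h2
        simp at h1 h2
        linarith
      · rw [cfun_re]
        have : 0 ≤ Real.sin (2*π*s) :=
          Real.sin_nonneg_of_nonneg_of_le_pi (by positivity) (by nlinarith)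
        linarith
      · rw [mkC_re]; nlinarith
      · rw [cfun_im]
        have : Real.cos (2*π*s) ≤ 0 :=
          Real.cos_nonpos_of_pi_div_two_le_of_le (by nlinarith) (by nlinarith)
        linarith
      · rw [mkC_im]; nlinarith
  · have hL : Lam (2*s - 1) = swapC (Lmap (4*s - 3)) := by
      rw [Lam, if_neg (by push_neg; linarith : ¬ (2*s - 1 ≤ 0)), show 2*(2*s-1) - 1 = 4*s - 3 by ring]
    rw [hL, vC_swap, vLmap]
    rw [show -((((|2*(4*s - 3)| - 2)/4 : ℝ) : ℂ) + ((2*(4*s - 3) : ℝ) : ℂ) * Complex.I)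
        = (((-((|2*(4*s - 3)| - 2)/4) : ℝ) : ℂ) + ((-(2*(4*s - 3)) : ℝ) : ℂ) * Complex.I)
      by push_cast; ring]
    have hsin : Real.sin (2*π*s) ≤ 0 := by
      have h1 : Real.sin (2*π*s - π) = -Real.sin (2*π*s) := Real.sin_sub_pi _
      have h2 : 0 ≤ Real.sin (2*π*s - π) :=
        Real.sin_nonneg_of_nonneg_of_le_pi (by nlinarith) (by nlinarith)
      linarith
    by_cases hq : s ≤ 3/4
    · have habs : |2*(4*s - 3)| = 6 - 8*s := by
        rw [abs_of_nonpos (by linarith)]; ring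
      rw [habs]
      refine seg_ne (σ := 1) (τ := 1) hl0 hl1 (cfun_ne s) ?_ (by norm_num) (by norm_num)
        ?_ ?_ ?_ ?_
      · intro hz
        have h1 := congrArg Complex.re hz
        have h2 := congrArg Complex.im hz
        rw [mkC_re] at h1
        rw [mkC_im] at h2
        simp at h1 h2
        linarith
      · rw [cfun_re]; linarith
      · rw [mkC_re]; nlinarith
      · rw [cfun_im]
        have : Real.cos (2*π*s) ≤ 0 :=
          Real.cos_nonpos_of_pi_div_two_le_of_le (by nlinarith) (by nlinarith)
        linarith
      · rw [mkC_im]; nlinarith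
    · have habs : |2*(4*s - 3)| = 8*s - 6 := by
        rw [_root_.abs_of_nonneg (by linarith)]; ring
      rw [habs]
      refine seg_ne (σ := 1) (τ := -1) hl0 hl1 (cfun_ne s) ?_ (by norm_num) (by norm_num)
        ?_ ?_ ?_ ?_
      · intro hz
        have h1 := congrArg Complex.re hz
        have h2 := congrArg Complex.im hz
        rw [mkC_re] at h1
        rw [mkC_im] at h2
        simp at h1 h2
        linarith
      · rw [cfun_re]; linarith
      · rw [mkC_re]; nlinarith
      · rw [cfun_im]
        have h1 : Real.cos (2*π - 2*π*s) = Real.cos (2*π*s) := by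
          rw [Real.cos_sub, Real.cos_two_pi, Real.sin_two_pi]; ring
        have h2 : 0 ≤ Real.cos (2*π - 2*π*s) :=
          Real.cos_nonneg_of_mem_Icc ⟨by nlinarith, by nlinarith⟩
        linarith
      · rw [mkC_im]; nlinarith

noncomputable def clR (s : ℝ) : ℝ := max 0 (min 1 s)

lemma clR_cont : Continuous clR := by unfold clR; fun_prop

lemma clR_mem (s : ℝ) : clR s ∈ Set.Icc (0:ℝ) 1 :=
  ⟨le_max_left _ _, max_le (by norm_num) (min_le_left _ _)⟩

lemma clR_eq {s : ℝ} (hs : s ∈ Set.Icc (0:ℝ) 1) : clR s = s := by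
  rw [clR, min_eq_right hs.2, max_eq_right hs.1]

/-! ### No contraction: a loop with winding number -1 cannot bound a square -/

def LiftP (f : ℝ × ℝ → ℂ) (r : ℝ) : Prop :=
  ∃ θ : ℝ → ℝ, Continuous θ ∧
    (∀ s ∈ Set.Icc (0:ℝ) 1, f (r, s) = Complex.exp ((θ s : ℂ) * Complex.I)) ∧
    θ 1 = θ 0 - 2 * π

lemma no_contract (G : ℝ × ℝ → ℂ) (hG : Continuous G) (h0 : ∀ q, G q ≠ 0)
    (hloop : ∀ r, G (r, 0) = G (r, 1))
    (θ₀ : ℝ → ℝ) (hθc : Continuous θ₀)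
    (hl : ∀ s ∈ Set.Icc (0:ℝ) 1, G (0, s) = (‖G (0, s)‖ : ℂ) * Complex.exp ((θ₀ s : ℂ) * Complex.I))
    (hw : θ₀ 1 = θ₀ 0 - 2 * π) :
    ∃ s ∈ Set.Icc (0:ℝ) 1, G (1, s) ≠ G (1, 0) := by
  classical
  set nG : ℝ × ℝ → ℂ := fun q => (‖G q‖ : ℂ)⁻¹ * G q with hnG
  have hGn0 : ∀ q, (‖G q‖ : ℂ) ≠ 0 := fun q =>
    Complex.ofReal_ne_zero.mpr (norm_ne_zero_iff.mpr (h0 q))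
  have hnorm : ∀ q, ‖nG q‖ = 1 := by
    intro q
    simp only [hnG]
    rw [norm_mul, norm_inv, Complex.norm_real, norm_norm, inv_mul_cancel₀ (norm_ne_zero_iff.mpr (h0 q))]
  have hne : ∀ q, nG q ≠ 0 := by
    intro q h
    have := hnorm q
    rw [h] at this
    simp at this
  have hcont : Continuous nG := by
    apply Continuous.mul
    · exact Continuous.inv₀ (Complex.continuous_ofReal.comp hG.norm) hGn0
    · exact hG
  have hloopn : ∀ r, nG (r, 0) = nG (r, 1) := by
    intro r
    simp only [hnG]
    rw [hloop r]
  have lift0 : LiftP nG 0 := by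
    refine ⟨θ₀, hθc, fun s hs => ?_, hw⟩
    have hnn : ‖G (0, s)‖ = ‖(‖G (0, s)‖ : ℂ) * Complex.exp ((θ₀ s : ℂ) * Complex.I)‖ := by
      rw [← hl s hs]
    simp only [hnG]
    rw [hl s hs, ← hnn, ← mul_assoc, inv_mul_cancel₀ (hGn0 (0, s)), one_mul]
  -- uniform continuity on the unit square
  have hKc : IsCompact (Set.Icc (0:ℝ) 1 ×ˢ Set.Icc (0:ℝ) 1) := isCompact_Icc.prod isCompact_Icc
  have huc := hKc.uniformContinuousOn_of_continuous hcont.continuousOn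
  rw [Metric.uniformContinuousOn_iff] at huc
  obtain ⟨δ, hδ0, hδ⟩ := huc 2 (by norm_num)
  -- propagation step
  have prop : ∀ r ∈ Set.Icc (0:ℝ) 1, ∀ r' ∈ Set.Icc (0:ℝ) 1,
      dist r' r < δ → LiftP nG r → LiftP nG r' := by
    rintro r hr r' hr' hd ⟨θ, hθc', hθ, hθw⟩
    set ρ : ℝ → ℂ := fun s => nG (r', clR s) * (nG (r, clR s))⁻¹ with hρ
    have hρc : Continuous ρ := by
      apply Continuous.mul
      · exact hcont.comp (continuous_const.prodMk clR_cont)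
      · exact Continuous.inv₀ (hcont.comp (continuous_const.prodMk clR_cont)) (fun s => hne _)
    have hρa : ∀ s, ‖ρ s‖ = 1 := by
      intro s
      simp only [hρ, norm_mul, norm_inv, hnorm]
      norm_num
    have hρne : ∀ s, ρ s ≠ 0 := by
      intro s h
      have := hρa s
      rw [h] at this
      simp at this
    have hd2 : ∀ s, dist (nG (r', clR s)) (nG (r, clR s)) < 2 := by
      intro s
      apply hδ (r', clR s) (Set.mem_prod.mpr ⟨hr', clR_mem s⟩) (r, clR s)
        (Set.mem_prod.mpr ⟨hr, clR_mem s⟩)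
      rw [Prod.dist_eq]
      simp only [dist_self]
      rw [max_eq_left dist_nonneg]
      exact hd
    have hslit : ∀ s, ρ s ∈ Complex.slitPlane := by
      intro s
      rw [Complex.mem_slitPlane_iff]
      by_contra hc
      push_neg at hc
      obtain ⟨h1, h2⟩ := hc
      have hsq : (ρ s).re ^ 2 + (ρ s).im ^ 2 = 1 := by
        have h3 := Complex.sq_norm (ρ s)
        rw [hρa s, Complex.normSq_apply] at h3
        nlinarith [h3]
      have hρ1 : ρ s = -1 := by
        have hre1 : (ρ s).re = -1 := by nlinarith [h2, hsq, h1]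
        refine Complex.ext ?_ ?_
        · rw [hre1]; simp
        · rw [h2]; simp
      have hant : nG (r', clR s) = -nG (r, clR s) := by
        have h4 : ρ s * nG (r, clR s) = nG (r', clR s) := by
          simp only [hρ]
          rw [mul_assoc, inv_mul_cancel₀ (hne _), mul_one]
        rw [← h4, hρ1]
        ring
      have h5 := hd2 s
      rw [dist_eq_norm, hant] at h5
      have h6 : ‖-nG (r, clR s) - nG (r, clR s)‖ = 2 := by
        rw [show -nG (r, clR s) - nG (r, clR s) = -(2 * nG (r, clR s)) by ring, norm_neg, norm_mul,
          hnorm]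
        norm_num
      rw [h6] at h5
      exact lt_irrefl 2 h5
    refine ⟨fun s => θ (clR s) + Complex.arg (ρ s), ?_, ?_, ?_⟩
    · apply Continuous.add (hθc'.comp clR_cont)
      rw [continuous_iff_continuousAt]
      intro s
      exact (Complex.continuousAt_arg (hslit s)).comp hρc.continuousAt
    · intro s hs
      show nG (r', s) = Complex.exp (((θ (clR s) + Complex.arg (ρ s) : ℝ) : ℂ) * Complex.I)
      rw [Complex.ofReal_add, add_mul, Complex.exp_add]
      have e1 : Complex.exp ((θ (clR s) : ℂ) * Complex.I) = nG (r, s) := by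
        rw [clR_eq hs]
        exact (hθ s hs).symm
      have e2 : Complex.exp ((Complex.arg (ρ s) : ℂ) * Complex.I) = ρ s := by
        have h7 := Complex.norm_mul_exp_arg_mul_I (ρ s)
        rw [hρa s] at h7
        simpa using h7
      rw [e1, e2]
      simp only [hρ]
      rw [clR_eq hs, mul_comm (nG (r, s)), mul_assoc, inv_mul_cancel₀ (hne _), mul_one]
    · have c1 : clR 1 = 1 := clR_eq ⟨zero_le_one, le_rfl⟩
      have c0 : clR 0 = 0 := clR_eq ⟨le_rfl, zero_le_one⟩
      have hρ01 : ρ 1 = ρ 0 := by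
        simp only [hρ]
        rw [c1, c0, ← hloopn r, ← hloopn r']
      show θ (clR 1) + Complex.arg (ρ 1) = θ (clR 0) + Complex.arg (ρ 0) - 2 * π
      rw [c1, c0, hρ01, hθw]
      ring
  -- chain from 0 to 1
  obtain ⟨n, hn⟩ := exists_nat_gt (1/δ)
  have hn0 : (0:ℝ) < n := lt_trans (by positivity) hn
  have hstep : (1:ℝ)/n < δ := by
    rw [div_lt_iff₀ hn0, mul_comm]
    exact (div_lt_iff₀ hδ0).mp hn
  have key : ∀ k : ℕ, k ≤ n → LiftP nG ((k:ℝ)/n) := by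
    intro k
    induction k with
    | zero =>
      intro _
      simpa using lift0
    | succ k ih =>
      intro hk
      have hk' : k ≤ n := Nat.le_of_succ_le hk
      have h1 : ((k:ℝ))/n ∈ Set.Icc (0:ℝ) 1 :=
        ⟨by positivity, by rw [div_le_one hn0]; exact_mod_cast hk'⟩
      have h2 : (((k+1:ℕ)):ℝ)/n ∈ Set.Icc (0:ℝ) 1 :=
        ⟨by positivity, by rw [div_le_one hn0]; exact_mod_cast hk⟩
      refine prop _ h1 _ h2 ?_ (ih hk')
      rw [Real.dist_eq, show (((k+1:ℕ)):ℝ)/n - (k:ℝ)/n = 1/n by push_cast; ring,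
        abs_of_pos (by positivity)]
      exact hstep
  have lift1 : LiftP nG 1 := by
    have h8 := key n le_rfl
    rwa [div_self (ne_of_gt hn0)] at h8
  -- conclude
  by_contra hcon
  push_neg at hcon
  obtain ⟨θ, hθc', hθ, hθw⟩ := lift1
  have hcst : ∀ s ∈ Set.Icc (0:ℝ) 1,
      Complex.exp ((θ s : ℂ) * Complex.I) = Complex.exp ((θ 0 : ℂ) * Complex.I) := by
    intro s hs
    rw [← hθ s hs, ← hθ 0 ⟨le_rfl, zero_le_one⟩]
    simp only [hnG]
    rw [hcon s hs]
  have hmem : θ 0 - π ∈ Set.Icc (θ 1) (θ 0) :=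
    ⟨by rw [hθw]; linarith [Real.pi_pos], by linarith [Real.pi_pos]⟩
  obtain ⟨s₀, hs₀, hv⟩ := intermediate_value_Icc' zero_le_one hθc'.continuousOn hmem
  have h9 := hcst s₀ hs₀
  rw [hv, Complex.ofReal_sub, sub_mul, Complex.exp_sub, Complex.exp_pi_mul_I] at h9
  rw [div_neg, div_one] at h9
  have h10 : (2:ℂ) * Complex.exp ((θ 0 : ℂ) * Complex.I) = 0 := by
    linear_combination -h9
  exact Complex.exp_ne_zero _ ((mul_eq_zero.mp h10).resolve_left two_ne_zero)

lemma cfun_cont : Continuous cfun := by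
  unfold cfun
  fun_prop

lemma cfun_norm (x : ℝ) : ‖cfun x‖ = 1 := by
  rw [cfun, Complex.norm_exp_ofReal_mul_I]

lemma clR_zero : clR 0 = 0 := clR_eq ⟨le_rfl, zero_le_one⟩
lemma clR_one : clR 1 = 1 := clR_eq ⟨zero_le_one, le_rfl⟩

lemma main5 (y : ↥Xcfg) (p : Path y y)
    (hp : ∀ s : unitInterval, (p s : Cfg) = Lam (2 * (s : ℝ) - 1)) :
    ¬ p.Homotopic (Path.refl y) := by
  intro hcon
  obtain ⟨H⟩ := hcon
  set pj : ℝ → unitInterval := fun s => Set.projIcc 0 1 zero_le_one s with hpj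
  set Gf : ℝ × ℝ → ℂ := fun q =>
    (1 - (clR (2*q.1) : ℂ)) * cfun (clR q.2) +
    (clR (2*q.1) : ℂ) * vC ((H (pj (clR (2*q.1 - 1)), pj q.2) : Cfg)) with hGf
  have hGc : Continuous Gf := by
    rw [hGf]
    refine (Continuous.mul ?_ ?_).add (Continuous.mul ?_ ?_)
    · exact continuous_const.sub (Complex.continuous_ofReal.comp (clR_cont.comp (by fun_prop)))
    · exact cfun_cont.comp (clR_cont.comp continuous_snd)
    · exact Complex.continuous_ofReal.comp (clR_cont.comp (by fun_prop))
    · refine vC_cont.comp (continuous_subtype_val.comp ((map_continuous H).comp ?_))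
      exact (continuous_projIcc.comp (clR_cont.comp (by fun_prop))).prodMk
        (continuous_projIcc.comp continuous_snd)
  have hG0 : ∀ q, Gf q ≠ 0 := by
    rintro ⟨r, s⟩
    by_cases hr : r ≤ 1/2
    · have hmu : clR (2*r - 1) = 0 := by
        rw [clR, min_eq_right (by linarith), max_eq_left (by linarith)]
      have hH : ((H (pj (clR (2*r - 1)), pj s) : Cfg)) = Lam (2 * clR s - 1) := by
        rw [hmu]
        have h1 : pj 0 = 0 := Set.projIcc_left zero_le_one
        rw [h1, H.apply_zero]
        exact hp (pj s)
      simp only [hGf]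
      rw [hH]
      exact segOK (clR_mem s).1 (clR_mem s).2 (clR_mem (2*r)).1 (clR_mem (2*r)).2
    · have hlam : clR (2*r) = 1 := by
        rw [clR, min_eq_left (by linarith), max_eq_right (by norm_num)]
      simp only [hGf, hlam, Complex.ofReal_one, sub_self, zero_mul, one_mul, zero_add]
      exact vC_ne (H _).2
  have hloopG : ∀ r, Gf (r, 0) = Gf (r, 1) := by
    intro r
    simp only [hGf]
    rw [clR_zero, clR_one]
    have hcf : cfun 0 = cfun 1 := by
      rw [cfun, cfun,
        show ((-(π/2) - 2*π*1 : ℝ) : ℂ) = ((-(π/2) - 2*π*0 : ℝ) : ℂ) - 2*π by push_cast; ring,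
        sub_mul, Complex.exp_sub, Complex.exp_two_pi_mul_I, div_one]
    have hq0 : pj (0:ℝ) = 0 := Set.projIcc_left zero_le_one
    have hq1 : pj (1:ℝ) = 1 := Set.projIcc_right zero_le_one
    rw [hcf, hq0, hq1, H.source, H.target]
  set θ₀ : ℝ → ℝ := fun s => -(π/2) - 2*π*clR s with hθ₀
  have hθ₀c : Continuous θ₀ := by
    rw [hθ₀]
    have := clR_cont
    fun_prop
  have hl : ∀ s ∈ Set.Icc (0:ℝ) 1,
      Gf (0, s) = (‖Gf (0, s)‖ : ℂ) * Complex.exp ((θ₀ s : ℂ) * Complex.I) := by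
    intro s hs
    have e : Gf (0, s) = cfun (clR s) := by
      simp only [hGf]
      rw [show (2*(0:ℝ)) = 0 by norm_num, clR_zero]
      push_cast
      ring
    rw [e, cfun_norm, Complex.ofReal_one, one_mul]
    rfl
  have hw : θ₀ 1 = θ₀ 0 - 2*π := by
    simp only [hθ₀, clR_zero, clR_one]
    ring
  obtain ⟨s₀, hs₀, hne2⟩ := no_contract Gf hGc hG0 hloopG θ₀ hθ₀c hl hw
  apply hne2
  have hg1 : ∀ s : ℝ, Gf (1, s) = vC (y : Cfg) := by
    intro s
    simp only [hGf]
    have hlam1 : clR (2*(1:ℝ)) = 1 := by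
      rw [clR, min_eq_left (by norm_num), max_eq_right (by norm_num)]
    have hmu1 : clR (2*(1:ℝ) - 1) = 1 := by
      rw [show (2*(1:ℝ) - 1) = 1 by norm_num, clR_one]
    rw [hlam1, hmu1, Complex.ofReal_one, sub_self, zero_mul, one_mul, zero_add]
    have hq1 : pj (1:ℝ) = 1 := Set.projIcc_right zero_le_one
    rw [hq1, H.apply_one]
    rfl
  rw [hg1 s₀, hg1 0]

/-- The loop `Λ` is well defined and continuous (the two formulas agree
at `t = 0` since `L(1) = swap(L(-1))`), it lands in `X`, satisfies `Λ(-1) = Λ(1)`, and it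
is not null-homotopic in `X`.  (This witnesses that the homology class of `α₁(ℓ₁, μ₁)` in
the arity `(2, 2)` component of the Swiss-Cheese operad is nonzero.) -/
theorem stmt15 :
    Lmap 1 = swapC (Lmap (-1)) ∧
    Continuous Lam ∧
    (∀ t ∈ Set.Icc (-1 : ℝ) 1, Lam t ∈ Xcfg) ∧
    Lam (-1) = Lam 1 ∧
    (∀ y : ↥Xcfg, (y : Cfg) = Lam (-1) →
      ∀ p : Path y y, (∀ s : unitInterval, (p s : Cfg) = Lam (2 * (s : ℝ) - 1)) →
        ¬ p.Homotopic (Path.refl y)) := by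
  refine ⟨part1, part2, part3, part4, ?_⟩
  intro y _ p hp
  exact main5 y p hp
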